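/- Consider $\dot x = Ax + BPu$ where $A$ is $n\times n$, $B$ is $n\times m$ with $\mathrm{rank}(B)=n$, and $P$ is an $m\times m$ diagonal projection matrix ($P^2 = P$). Suppose $\hat A$ satisfies $B\hat A = A$ and $P\hat A = \hat A$, $K$ is an $m\times n$ gain matrix, $x_g\in\mathbb{R}^n$, and $v = -(\hat A + K)x_g$. Then with $u(t) = v + Kx(t)$ the closed-loop dynamics equal $\dot x = (A+BPK)x + BPv$, and $x_g$ is a rest point of this system. If moreover $A+BPK$ is Hurwitz, every solution converges to $x_g$. -/

import Mathlib

open Matrix Filter Module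


lemma decay {E : Type*} [NormedAddCommGroup E] [NormedSpace ℂ E] [CompleteSpace E]
    (lam : ℂ) (hl : lam.re < 0) (u g : ℝ → E) (hgc : Continuous g)
    (hg0 : Tendsto g atTop (nhds 0))
    (hu : ∀ t, HasDerivAt u (lam • u t + g t) t) :
    Tendsto u atTop (nhds 0) := by
  set a : ℝ := -lam.re with ha_def
  have ha : 0 < a := by simp [ha_def]; linarith
  set G : ℝ → E := fun s => Complex.exp (-(lam * s)) • g s with hG
  have hGc : Continuous G := by
    apply Continuous.smul _ hgc
    exact Complex.continuous_exp.comp (by continuity)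
  have hGnorm : ∀ s : ℝ, ‖G s‖ = Real.exp (a * s) * ‖g s‖ := by
    intro s
    rw [hG, norm_smul]
    congr 1
    rw [Complex.norm_exp]
    congr 1
    simp [Complex.mul_re, ha_def]
  have hkey : ∀ t : ℝ, Complex.exp (-(lam * t)) • u t - u 0 = ∫ s in (0:ℝ)..t, G s := by
    intro t
    have hderiv : ∀ s ∈ Set.uIcc (0:ℝ) t,
        HasDerivAt (fun r : ℝ => Complex.exp (-(lam * r)) • u r) (G s) s := by
      intro s _
      have h1 : HasDerivAt (fun r : ℝ => -(lam * r)) (-lam) s := by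
        simpa [Pi.neg_def] using ((Complex.ofRealCLM.hasDerivAt (x := s)).const_mul lam).neg
      have hexp : HasDerivAt (fun r : ℝ => Complex.exp (-(lam * r)))
          (Complex.exp (-(lam * s)) * -lam) s := h1.cexp
      have := hexp.smul (hu s)
      convert this using 1
      rfl
      rw [hG]
      simp only [smul_add, smul_smul]
      module
    have := intervalIntegral.integral_eq_sub_of_hasDerivAt hderiv
      (hGc.intervalIntegrable 0 t)
    rw [this]
    simp
  have hu_eq : ∀ t : ℝ, u t = Complex.exp (lam * t) • (u 0 + ∫ s in (0:ℝ)..t, G s) := by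
    intro t
    have h := hkey t
    have h2 : Complex.exp (-(lam * t)) • u t = u 0 + ∫ s in (0:ℝ)..t, G s := by
      rw [← h]; abel
    rw [← h2, smul_smul, ← Complex.exp_add]
    simp
  rw [Metric.tendsto_nhds]
  intro ε hε
  have hεa : 0 < ε * a / 4 := by positivity
  obtain ⟨T₀, hT₀⟩ := (Metric.tendsto_atTop.mp hg0) (ε * a / 4) hεa
  set T : ℝ := max T₀ 0 with hT_def
  have hT0 : (0:ℝ) ≤ T := le_max_right _ _
  have hTbound : ∀ s : ℝ, T ≤ s → ‖g s‖ ≤ ε * a / 4 := by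
    intro s hs
    have := hT₀ s (le_trans (le_max_left _ _) hs)
    rw [dist_zero_right] at this
    linarith
  set C1 : ℝ := ‖u 0‖ + ∫ s in (0:ℝ)..T, ‖G s‖ with hC1
  have hIntN : ∀ p q : ℝ, IntervalIntegrable (fun s => ‖G s‖) MeasureTheory.volume p q :=
    fun p q => (hGc.norm).intervalIntegrable p q
  -- eventually exp(lam.re*t) * C1 < ε/2
  have hev2 : ∀ᶠ t : ℝ in atTop, Real.exp (lam.re * t) * C1 < ε / 2 := by
    have h1 : Tendsto (fun t : ℝ => Real.exp (lam.re * t) * C1) atTop (nhds (0 * C1)) := by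
      apply Tendsto.mul_const
      have : Tendsto (fun t : ℝ => lam.re * t) atTop atBot :=
        tendsto_id.const_mul_atTop_of_neg hl
      exact Real.tendsto_exp_atBot.comp this
    rw [zero_mul] at h1
    exact h1.eventually_lt_const (by linarith)
  filter_upwards [eventually_ge_atTop T, hev2] with t ht1 ht2
  rw [dist_zero_right]
  have h0t : (0:ℝ) ≤ t := le_trans hT0 ht1
  -- tail integral bound
  have htail : (∫ s in T..t, ‖G s‖) ≤ ε / 4 * Real.exp (a * t) := by
    have hmono : (∫ s in T..t, ‖G s‖) ≤ ∫ s in T..t, ε * a / 4 * Real.exp (a * s) := by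
      apply intervalIntegral.integral_mono_on ht1 (hIntN T t)
      · exact (Continuous.intervalIntegrable (by fun_prop) T t)
      · intro s hs
        rw [hGnorm s]
        rw [mul_comm (ε * a / 4) _]
        exact mul_le_mul_of_nonneg_left (hTbound s hs.1) (Real.exp_nonneg _)
    have hcalc : (∫ s in T..t, ε * a / 4 * Real.exp (a * s))
        = ε / 4 * Real.exp (a * t) - ε / 4 * Real.exp (a * T) := by
      have hd : ∀ s ∈ Set.uIcc T t, HasDerivAt (fun r : ℝ => ε / 4 * Real.exp (a * r))
          (ε * a / 4 * Real.exp (a * s)) s := by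
        intro s _
        have : HasDerivAt (fun r : ℝ => Real.exp (a * r)) (Real.exp (a * s) * a) s := by
          simpa using ((hasDerivAt_id s).const_mul a).exp
        convert this.const_mul (ε / 4) using 1
        rfl
        rfl
        ring
      rw [intervalIntegral.integral_eq_sub_of_hasDerivAt hd
        (Continuous.intervalIntegrable (by fun_prop) T t)]
    rw [hcalc] at hmono
    have : 0 ≤ ε / 4 * Real.exp (a * T) := by positivity
    linarith
  calc ‖u t‖ = Real.exp (lam.re * t) * ‖u 0 + ∫ s in (0:ℝ)..t, G s‖ := by
        rw [hu_eq t, norm_smul]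
        congr 1
        rw [Complex.norm_exp]
        congr 1
        simp [Complex.mul_re]
    _ ≤ Real.exp (lam.re * t) * (‖u 0‖ + ∫ s in (0:ℝ)..t, ‖G s‖) := by
        apply mul_le_mul_of_nonneg_left _ (Real.exp_nonneg _)
        refine le_trans (norm_add_le _ _) ?_
        gcongr
        exact intervalIntegral.norm_integral_le_integral_norm h0t
    _ = Real.exp (lam.re * t) * (C1 + ∫ s in T..t, ‖G s‖) := by
        rw [hC1, ← intervalIntegral.integral_add_adjacent_intervals (hIntN 0 T) (hIntN T t)]
        ring_nf
    _ ≤ Real.exp (lam.re * t) * (C1 + ε / 4 * Real.exp (a * t)) := by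
        apply mul_le_mul_of_nonneg_left _ (Real.exp_nonneg _)
        linarith
    _ = Real.exp (lam.re * t) * C1 + ε / 4 * (Real.exp (lam.re * t) * Real.exp (a * t)) := by
        ring
    _ = Real.exp (lam.re * t) * C1 + ε / 4 := by
        rw [← Real.exp_add]
        have : lam.re * t + a * t = 0 := by rw [ha_def]; ring
        rw [this, Real.exp_zero, mul_one]
    _ < ε := by linarith

lemma lin_conv : ∀ (N : ℕ) (E : Type) [NormedAddCommGroup E] [NormedSpace ℂ E]
    [FiniteDimensional ℂ E], finrank ℂ E = N →
    ∀ f : E →ₗ[ℂ] E, (∀ μ ∈ spectrum ℂ f, μ.re < 0) →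
    ∀ z : ℝ → E, (∀ t, HasDerivAt z (f (z t)) t) → Tendsto z atTop (nhds 0) := by
  intro N
  induction N with
  | zero =>
    intro E _ _ _ hrank f _ z _
    have hsub : Subsingleton E := finrank_zero_iff.mp hrank
    have hz0 : ∀ t, z t = 0 := fun t => Subsingleton.elim _ _
    simp only [funext hz0]
    exact tendsto_const_nhds
  | succ N ih =>
    intro E _ _ _ hrank f hspec z hz
    have hnt : Nontrivial E := finrank_pos_iff.mp (by rw [hrank]; exact N.succ_pos)
    obtain ⟨lam, hlam⟩ := Module.End.exists_eigenvalue f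
    obtain ⟨v, hv⟩ := hlam.exists_hasEigenvector
    have hlam_re : lam.re < 0 :=
      hspec lam (Module.End.hasEigenvalue_iff_mem_spectrum.mp hlam)
    set V : Submodule ℂ E := ℂ ∙ v with hV
    obtain ⟨W, hcompl⟩ := Submodule.exists_isCompl V
    have hrankW : finrank ℂ W = N := by
      have h1 := Submodule.finrank_add_eq_of_isCompl hcompl
      have h2 : finrank ℂ V = 1 := finrank_span_singleton hv.2
      omega
    set prW : E →ₗ[ℂ] W := W.linearProjOfIsCompl V hcompl.symm with hprW
    set prV : E →ₗ[ℂ] V := V.linearProjOfIsCompl W hcompl with hprV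
    have hdecomp : ∀ x : E, ((prV x : E) + (prW x : E)) = x := fun x =>
      Submodule.projection_add_projection_eq_self hcompl x
    have hprV_id : ∀ (x : E) (hx : x ∈ V), ((prV x : E)) = x := fun x hx =>
      congrArg Subtype.val (Submodule.linearProjOfIsCompl_apply_left hcompl ⟨x, hx⟩)
    have hprW_zero : ∀ (x : E), x ∈ V → prW x = 0 := fun x hx =>
      Submodule.projectionOnto_apply_of_mem_right hcompl.symm hx
    have hfV : ∀ x : E, x ∈ V → f x = lam • x := by
      intro x hx
      obtain ⟨c, rfl⟩ := Submodule.mem_span_singleton.mp hx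
      rw [_root_.map_smul, hv.apply_eq_smul, smul_smul, smul_smul, mul_comm]
    set g : W →ₗ[ℂ] W := prW ∘ₗ f ∘ₗ W.subtype with hg
    -- spectrum of g
    have hspecg : ∀ μ ∈ spectrum ℂ g, μ.re < 0 := by
      intro μ hμ
      obtain ⟨w, hw⟩ := (Module.End.hasEigenvalue_iff_mem_spectrum.mpr hμ).exists_hasEigenvector
      have hwe : g w = μ • w := hw.apply_eq_smul
      by_cases hμlam : μ = lam
      · rwa [hμlam]
      · obtain ⟨c, hc⟩ := Submodule.mem_span_singleton.mp (prV (f (w : E))).2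
        have hfw : f (w : E) = c • v + μ • (w : E) := by
          have h1 := hdecomp (f (w : E))
          have h2 : prW (f (w : E)) = μ • w := by
            have h3 : g w = prW (f (w : E)) := by simp [hg]
            rw [← h3, hwe]
          rw [h2, ← hc] at h1
          rw [← h1]
          simp
        set β : ℂ := c / (μ - lam) with hβ
        set y : E := (w : E) + β • v with hy
        have hfy : f y = μ • y := by
          rw [hy, _root_.map_add, _root_.map_smul, hfw, hv.apply_eq_smul]
          have hμl : μ - lam ≠ 0 := sub_ne_zero.mpr hμlam
          rw [smul_smul, smul_add, smul_smul]
          have hco : c + β * lam = μ * β := by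
            rw [hβ]; field_simp; ring
          rw [← hco, add_smul]; abel
        have hy0 : y ≠ 0 := by
          intro h
          apply hw.2
          have hwV : (w : E) ∈ V := by
            have : (w : E) = -(β • v) := eq_neg_of_add_eq_zero_left (hy ▸ h)
            rw [this]
            exact Submodule.neg_mem _ (Submodule.smul_mem _ _ (Submodule.mem_span_singleton_self v))
          have : (w : E) = 0 := Submodule.disjoint_def.mp hcompl.disjoint (w : E) hwV w.2
          exact Subtype.ext this
        have : Module.End.HasEigenvalue f μ :=
          Module.End.hasEigenvalue_of_hasEigenvector
            ⟨Module.End.mem_eigenspace_iff.mpr hfy, hy0⟩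
        exact hspec μ (Module.End.hasEigenvalue_iff_mem_spectrum.mp this)
    -- dynamics of the W-component
    set prWc : E →L[ℝ] W := (prW.restrictScalars ℝ).toContinuousLinearMap with hprWc
    set wt : ℝ → W := fun t => prW (z t) with hwt
    have hsplitf : ∀ t, f (z t) = lam • ((prV (z t) : E)) + f ((prW (z t) : E)) := by
      intro t
      conv_lhs => rw [← hdecomp (z t)]
      rw [map_add, hfV _ (prV (z t)).2]
    have hw : ∀ t, HasDerivAt wt (g (wt t)) t := by
      intro t
      have h1 : HasDerivAt wt (prWc (f (z t))) t :=
        prWc.hasFDerivAt.comp_hasDerivAt t (hz t)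
      have h2 : prWc (f (z t)) = g (wt t) := by
        show prW (f (z t)) = g (wt t)
        rw [hsplitf t, _root_.map_add,
          hprW_zero _ (Submodule.smul_mem _ _ (prV (z t)).2), zero_add]
        simp [hg, hwt]
      rw [← h2]; exact h1
    have hwt0 : Tendsto wt atTop (nhds 0) := ih W hrankW g hspecg wt hw
    have hwtc : Continuous wt :=
      continuous_iff_continuousAt.mpr fun t => (hw t).continuousAt
    -- dynamics of the V-component
    set q : W →ₗ[ℂ] E := V.subtype ∘ₗ prV ∘ₗ f ∘ₗ W.subtype with hq
    set qc : W →L[ℝ] E := (q.restrictScalars ℝ).toContinuousLinearMap with hqc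
    set prVc : E →L[ℝ] E := ((V.subtype ∘ₗ prV).restrictScalars ℝ).toContinuousLinearMap with hprVc
    set ut : ℝ → E := fun t => (prV (z t) : E) with hut
    have hu : ∀ t, HasDerivAt ut (lam • ut t + qc (wt t)) t := by
      intro t
      have h1 : HasDerivAt ut (prVc (f (z t))) t :=
        prVc.hasFDerivAt.comp_hasDerivAt t (hz t)
      have h2 : prVc (f (z t)) = lam • ut t + qc (wt t) := by
        show ((prV (f (z t)) : E)) = lam • ut t + qc (wt t)
        rw [hsplitf t, _root_.map_add]
        have hm : lam • ((prV (z t) : E)) ∈ V := Submodule.smul_mem _ _ (prV (z t)).2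
        have : ((prV (lam • ((prV (z t) : E))) : E)) = lam • ((prV (z t) : E)) :=
          hprV_id _ hm
        rw [Submodule.coe_add, this]
        rfl
      rw [← h2]; exact h1
    have hqcont : Continuous fun t => qc (wt t) := qc.continuous.comp hwtc
    have hq0 : Tendsto (fun t => qc (wt t)) atTop (nhds 0) := by
      have := (qc.continuous.tendsto 0).comp hwt0
      simpa [Function.comp_def] using this
    have hut0 : Tendsto ut atTop (nhds 0) := decay lam hlam_re ut _ hqcont hq0 hu
    have hfin : Tendsto (fun t => ut t + ((wt t : E))) atTop (nhds 0) := by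
      have h2 : Tendsto (fun t => ((wt t : E))) atTop (nhds 0) := by
        have := (continuous_subtype_val.tendsto (0 : W)).comp hwt0
        simpa [Function.comp_def] using this
      simpa using hut0.add h2
    have : z = fun t => ut t + ((wt t : E)) := by
      funext t
      exact (hdecomp (z t)).symm
    rwa [this]


theorem stmt_15 (n m : ℕ) (A : Matrix (Fin n) (Fin n) ℝ) (B : Matrix (Fin n) (Fin m) ℝ)
    (P : Matrix (Fin m) (Fin m) ℝ) (Ahat K : Matrix (Fin m) (Fin n) ℝ)
    (xg : Fin n → ℝ) (v : Fin m → ℝ)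
    (hrank : B.rank = n) (hPdiag : P.IsDiag) (hPproj : P * P = P)
    (hAhat : B * Ahat = A) (hPA : P * Ahat = Ahat)
    (hv : v = -((Ahat + K) *ᵥ xg)) :
    (∀ w : Fin n → ℝ, A *ᵥ w + (B * P) *ᵥ (v + K *ᵥ w) =
        (A + B * P * K) *ᵥ w + (B * P) *ᵥ v) ∧
      ((A + B * P * K) *ᵥ xg + (B * P) *ᵥ v = 0) ∧
      ((∀ μ ∈ spectrum ℂ ((A + B * P * K).map (Complex.ofReal)), μ.re < 0) →
        ∀ x : ℝ → (Fin n → ℝ),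
          (∀ t, HasDerivAt x ((A + B * P * K) *ᵥ x t + (B * P) *ᵥ v) t) →
            Tendsto x atTop (nhds xg)) := by
  have hBPAK : B * P * (Ahat + K) = A + B * P * K := by
    rw [Matrix.mul_add, Matrix.mul_assoc, hPA, hAhat]
  have hrest : (A + B * P * K) *ᵥ xg + (B * P) *ᵥ v = 0 := by
    rw [hv, Matrix.mulVec_neg, Matrix.mulVec_mulVec, hBPAK]
    exact add_neg_cancel _
  refine ⟨?_, hrest, ?_⟩
  · intro w
    rw [Matrix.mulVec_add, Matrix.add_mulVec, Matrix.mulVec_mulVec]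
    abel
  · intro hspec x hx
    set M : Matrix (Fin n) (Fin n) ℝ := A + B * P * K with hM
    set c : Fin n → ℝ := (B * P) *ᵥ v with hc
    set Mc : Matrix (Fin n) (Fin n) ℂ := M.map Complex.ofReal with hMc
    set y : ℝ → (Fin n → ℝ) := fun t => x t - xg with hy
    have hyd : ∀ t, HasDerivAt y (M *ᵥ (y t)) t := by
      intro t
      have h1 := (hx t).sub_const xg
      have h2 : M *ᵥ x t + c = M *ᵥ (y t) := by
        rw [hy]
        rw [Matrix.mulVec_sub]
        rw [eq_neg_of_add_eq_zero_right hrest]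
        abel
      rw [← h2]; exact h1
    set L : (Fin n → ℝ) →L[ℝ] (Fin n → ℂ) :=
      ContinuousLinearMap.pi (fun i => Complex.ofRealCLM.comp (ContinuousLinearMap.proj i)) with hL
    set z : ℝ → (Fin n → ℂ) := fun t => L (y t) with hz
    have hzi : ∀ t i, z t i = ((y t i : ℝ) : ℂ) := by
      intro t i
      simp [hz, hL]
    have hzd : ∀ t, HasDerivAt z ((Matrix.toLinAlgEquiv' Mc) (z t)) t := by
      intro t
      have h1 : HasDerivAt z (L (M *ᵥ (y t))) t :=
        L.hasFDerivAt.comp_hasDerivAt t (hyd t)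
      have h2 : L (M *ᵥ (y t)) = (Matrix.toLinAlgEquiv' Mc) (z t) := by
        funext i
        have : (Matrix.toLinAlgEquiv' Mc) (z t) = Mc *ᵥ (z t) := rfl
        rw [this]
        simp only [hL, ContinuousLinearMap.pi_apply, ContinuousLinearMap.comp_apply,
          ContinuousLinearMap.proj_apply, Complex.ofRealCLM_apply]
        rw [Matrix.mulVec, Matrix.mulVec]
        simp only [dotProduct, hMc, Matrix.map_apply, hzi]
        push_cast
        rfl
      rw [← h2]; exact h1
    have hspecf : ∀ μ ∈ spectrum ℂ (Matrix.toLinAlgEquiv' Mc), μ.re < 0 := by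
      intro μ hμ
      rw [AlgEquiv.spectrum_eq] at hμ
      exact hspec μ hμ
    have hzt : Tendsto z atTop (nhds 0) :=
      lin_conv (finrank ℂ (Fin n → ℂ)) (Fin n → ℂ) rfl
        (Matrix.toLinAlgEquiv' Mc) hspecf z hzd
    rw [tendsto_pi_nhds]
    intro i
    have hzti : Tendsto (fun t => z t i) atTop (nhds 0) := by
      have := tendsto_pi_nhds.mp hzt i
      simpa using this
    have hre : Tendsto (fun t => (z t i).re) atTop (nhds 0) := by
      have := (Complex.continuous_re.tendsto 0).comp hzti
      simpa [Function.comp_def] using this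
    have heq : (fun t => (z t i).re + xg i) = fun t => x t i := by
      funext t
      rw [hzi t i]
      simp [hy]
    have := hre.add (tendsto_const_nhds (x := xg i))
    rw [heq] at this
    simpa using this
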